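/- Let λ > 1, μ ∈ ℝ \ {0, 1}, and a, b ∈ ℝⁿ with a ≠ b. Let G be the group generated by f(x) = λ(x - a) + a and g(x) = μ(x - b) + b. Then the closure of the orbit G(a) equals the affine line ℝ(b - a) + a. -/

import Mathlib

-- powers of a translation
lemma aux_trans_zpow {V : Type*} [AddCommGroup V] (t : Equiv.Perm V) (v : V)
    (h : ∀ x, t x = x + v) : ∀ (m : ℤ) (x : V), (t ^ m) x = x + m • v := by
  have hinv : ∀ x, t⁻¹ x = x + (-v) := by
    intro x
    apply t.injective
    rw [← Equiv.Perm.mul_apply, mul_inv_cancel, Equiv.Perm.one_apply, h, neg_add_cancel_right]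
  intro m
  induction m using Int.induction_on with
  | zero => simp
  | succ k ih =>
      intro x
      rw [zpow_add_one, Equiv.Perm.mul_apply, h, ih, add_zsmul, one_zsmul]
      abel
  | pred k ih =>
      intro x
      rw [zpow_sub_one, Equiv.Perm.mul_apply, hinv, ih,
        show (-(k:ℤ) - 1) = -(k:ℤ) + (-1) by ring, add_zsmul]
      simp only [neg_zsmul, one_zsmul]
      abel

-- powers of a dilation
lemma aux_dil_pow {V : Type*} [AddCommGroup V] [Module ℝ V] (f : Equiv.Perm V) (l : ℝ) (a : V)
    (hf : ∀ x, f x = l • (x - a) + a) : ∀ (k : ℕ) (x : V), (f ^ k) x = l ^ k • (x - a) + a := by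
  intro k
  induction k with
  | zero => intro x; simp
  | succ k ih =>
      intro x
      rw [pow_succ, Equiv.Perm.mul_apply, hf, ih, pow_succ]
      match_scalars <;> ring

theorem stmt_9 {n : ℕ} (l μ : ℝ) (hl : 1 < l) (hμ0 : μ ≠ 0) (hμ1 : μ ≠ 1)
    (a b : Fin n → ℝ) (hab : a ≠ b)
    (f g : Equiv.Perm (Fin n → ℝ))
    (hf : ∀ x, f x = l • (x - a) + a) (hg : ∀ x, g x = μ • (x - b) + b)
    (G : Subgroup (Equiv.Perm (Fin n → ℝ))) (hG : G = Subgroup.closure {f, g}) :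
    closure {y | ∃ h ∈ G, h a = y} = {y | ∃ t : ℝ, y = t • (b - a) + a} := by
  subst hG
  set d : Fin n → ℝ := b - a with hd
  have hl0 : (0:ℝ) < l := lt_trans one_pos hl
  have hlne : l ≠ 0 := ne_of_gt hl0
  -- inverse formulas
  have hf' : ∀ x : Fin n → ℝ, f⁻¹ x = l⁻¹ • (x - a) + a := by
    intro x
    apply f.injective
    rw [← Equiv.Perm.mul_apply, mul_inv_cancel, Equiv.Perm.one_apply, hf]
    match_scalars <;> field_simp <;> ring
  have hg' : ∀ x : Fin n → ℝ, g⁻¹ x = μ⁻¹ • (x - b) + b := by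
    intro x
    apply g.injective
    rw [← Equiv.Perm.mul_apply, mul_inv_cancel, Equiv.Perm.one_apply, hg]
    match_scalars <;> field_simp <;> ring
  -- the line is closed
  have hLclosed : IsClosed {y : Fin n → ℝ | ∃ t : ℝ, y = t • d + a} := by
    have h1 : IsClosed ((Submodule.span ℝ {d} : Submodule ℝ (Fin n → ℝ)) : Set (Fin n → ℝ)) :=
      (Submodule.span ℝ {d}).closed_of_finiteDimensional
    have h2 : {y : Fin n → ℝ | ∃ t : ℝ, y = t • d + a}
        = (Homeomorph.addRight a) '' ((Submodule.span ℝ {d} : Submodule ℝ (Fin n → ℝ)) : Set (Fin n → ℝ)) := by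
      ext y
      simp only [Set.mem_setOf_eq, Set.mem_image, SetLike.mem_coe,
        Submodule.mem_span_singleton, Homeomorph.coe_addRight]
      constructor
      · rintro ⟨t, rfl⟩; exact ⟨t • d, ⟨t, rfl⟩, rfl⟩
      · rintro ⟨x, ⟨t, rfl⟩, rfl⟩; exact ⟨t, rfl⟩
    rw [h2]
    exact (Homeomorph.addRight a).isClosedMap _ h1
  -- orbit is contained in the line
  have horbit : ∀ h ∈ Subgroup.closure {f, g}, ∃ t : ℝ, h a = t • d + a := by
    intro h hh
    have key : ∀ h ∈ Subgroup.closure {f, g},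
        (∀ t : ℝ, ∃ s : ℝ, h (t • d + a) = s • d + a) ∧
        (∀ t : ℝ, ∃ s : ℝ, h⁻¹ (t • d + a) = s • d + a) := by
      intro h hh
      induction hh using Subgroup.closure_induction with
      | mem x hx =>
          rcases hx with rfl | rfl
          · constructor
            · intro t; exact ⟨l * t, by rw [hf]; match_scalars <;> ring⟩
            · intro t; exact ⟨l⁻¹ * t, by rw [hf']; match_scalars <;> ring⟩
          · have hb : b = d + a := by rw [hd]; abel
            constructor
            · intro t
              refine ⟨μ * (t - 1) + 1, ?_⟩
              rw [hg, hb]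
              match_scalars <;> ring
            · intro t
              refine ⟨μ⁻¹ * (t - 1) + 1, ?_⟩
              rw [hg', hb]
              match_scalars <;> ring
      | one => exact ⟨fun t => ⟨t, by simp⟩, fun t => ⟨t, by simp⟩⟩
      | mul x y hx hy ihx ihy =>
          constructor
          · intro t
            obtain ⟨s, hs⟩ := ihy.1 t
            obtain ⟨u, hu⟩ := ihx.1 s
            exact ⟨u, by rw [Equiv.Perm.mul_apply, hs, hu]⟩
          · intro t
            rw [mul_inv_rev]
            obtain ⟨s, hs⟩ := ihx.2 t
            obtain ⟨u, hu⟩ := ihy.2 s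
            exact ⟨u, by rw [Equiv.Perm.mul_apply, hs, hu]⟩
      | inv x hx ihx => exact ⟨ihx.2, by simpa using ihx.1⟩
    obtain ⟨s, hs⟩ := (key h hh).1 0
    exact ⟨s, by simpa using hs⟩
  -- generators in the group
  have hfG : f ∈ Subgroup.closure {f, g} := Subgroup.subset_closure (by simp)
  have hgG : g ∈ Subgroup.closure {f, g} := Subgroup.subset_closure (by simp)
  -- the translation
  set c : ℝ := (1 - l) * (1 - μ) with hc
  have hcne : c ≠ 0 := by
    apply mul_ne_zero
    · intro h; nlinarith
    · intro h
      apply hμ1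
      linarith [sub_eq_zero.mp h]
  set τ : Equiv.Perm (Fin n → ℝ) := g * f * (f * g)⁻¹ with hτdef
  have hτmem : τ ∈ Subgroup.closure {f, g} :=
    mul_mem (mul_mem hgG hfG) (inv_mem (mul_mem hfG hgG))
  have hτ : ∀ x : Fin n → ℝ, τ x = x + c • d := by
    intro y
    obtain ⟨x, rfl⟩ : ∃ x, (f * g) x = y := (f * g).surjective y
    have h1 : τ ((f * g) x) = g (f x) := by
      rw [hτdef]
      simp [Equiv.Perm.mul_apply]
    rw [h1, hg, hf, Equiv.Perm.mul_apply, hf, hg, hc, hd]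
    match_scalars <;> ring
  -- orbit points
  have horbpt : ∀ (k : ℕ) (m : ℤ),
      ((m : ℝ) * c / l ^ k) • d + a
        ∈ {y : Fin n → ℝ | ∃ h ∈ Subgroup.closure {f, g}, h a = y} := by
    intro k m
    refine ⟨(f ^ k)⁻¹ * (τ ^ m * f ^ k), mul_mem (inv_mem (pow_mem hfG k))
      (mul_mem (zpow_mem hτmem m) (pow_mem hfG k)), ?_⟩
    have hfk : (f ^ k) a = a := by rw [aux_dil_pow f l a hf]; simp
    have hτm : (τ ^ m) a = a + ((m : ℝ) * c) • d := by
      rw [aux_trans_zpow τ (c • d) hτ m a]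
      congr 1
      rw [← Int.cast_smul_eq_zsmul ℝ, smul_smul]
    have hlk : (l : ℝ) ^ k ≠ 0 := pow_ne_zero _ hlne
    rw [Equiv.Perm.mul_apply, Equiv.Perm.mul_apply, hfk, hτm]
    apply (f ^ k).injective
    rw [← Equiv.Perm.mul_apply, mul_inv_cancel, Equiv.Perm.one_apply, aux_dil_pow f l a hf, add_sub_cancel_right, smul_smul,
      mul_div_cancel₀ _ hlk]
    abel
  ext y
  simp only [Set.mem_setOf_eq]
  constructor
  · intro hy
    have := closure_minimal (fun z hz => ?_) hLclosed hy
    · exact this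
    · obtain ⟨h, hh, rfl⟩ := hz
      obtain ⟨t, ht⟩ := horbit h hh
      exact ⟨t, ht⟩
  · rintro ⟨t, rfl⟩
    -- density argument
    set u : ℕ → ℝ := fun k => ((⌊t * l ^ k / c⌋ : ℤ) : ℝ) * c / l ^ k with hu
    have hulim : Filter.Tendsto u Filter.atTop (nhds t) := by
      have hbound : ∀ k, ‖u k - t‖ ≤ |c| * (1 / l) ^ k := by
        intro k
        set r : ℝ := t * l ^ k / c with hr
        have hlk : (0:ℝ) < l ^ k := pow_pos hl0 k
        have ht' : t = r * c / l ^ k := by rw [hr]; field_simp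
        have h1 : u k - t = ((⌊r⌋ : ℝ) - r) * (c / l ^ k) := by
          rw [hu, ht']; field_simp
        rw [Real.norm_eq_abs, h1, abs_mul]
        have h2 : |(⌊r⌋ : ℝ) - r| ≤ 1 := by
          rw [abs_le]
          constructor
          · linarith [Int.lt_floor_add_one r]
          · linarith [Int.floor_le r]
        have h3 : |c / l ^ k| = |c| * (1 / l) ^ k := by
          rw [abs_div, abs_of_pos hlk, div_pow, one_pow, div_eq_mul_one_div]
        calc |(⌊r⌋ : ℝ) - r| * |c / l ^ k| ≤ 1 * |c / l ^ k| := by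
              apply mul_le_mul_of_nonneg_right h2 (abs_nonneg _)
          _ = |c| * (1 / l) ^ k := by rw [one_mul, h3]
      have hglim : Filter.Tendsto (fun k => |c| * (1 / l) ^ k) Filter.atTop (nhds 0) := by
        have h0 : Filter.Tendsto (fun k : ℕ => (1 / l) ^ k) Filter.atTop (nhds 0) := by
          apply tendsto_pow_atTop_nhds_zero_of_lt_one
          · positivity
          · rw [div_lt_one hl0]; exact hl
        simpa using h0.const_mul |c|
      have hz : Filter.Tendsto (fun k => u k - t) Filter.atTop (nhds 0) :=
        squeeze_zero_norm hbound hglim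
      have := hz.add_const t
      simpa using this
    have hptlim : Filter.Tendsto (fun k => u k • d + a) Filter.atTop (nhds (t • d + a)) :=
      (hulim.smul_const d).add_const a
    apply mem_closure_of_tendsto hptlim
    filter_upwards with k
    have := horbpt k ⌊t * l ^ k / c⌋
    simpa [hu] using this
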